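/- Let g ≥ 2 and let θ, θ' be linear forms on V = (Fin (g+1) → ZMod 2), each distinct from the zero form θ₀ : x ↦ 0 and from the form θ₁ : x ↦ ∑_{i=0}^{g} x_i. Then θ and θ' lie in the same orbit under the right-composition action of O(V) (i.e. θ' = θ ∘ T for some T ∈ O(V)) if and only if ∑_{i=0}^{g} θ(e_i) = ∑_{i=0}^{g} θ'(e_i) in ZMod 2. -/

import Mathlib

open Finset

namespace OrbitAux

variable {g : ℕ}

abbrev V (g : ℕ) := Fin (g + 1) → ZMod 2

def dot (x y : V g) : ZMod 2 := ∑ i, x i * y i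

lemma dot_comm (x y : V g) : dot x y = dot y x := by
  simp [dot, mul_comm]

lemma dot_add_left (x y z : V g) : dot (x + y) z = dot x z + dot y z := by
  simp [dot, add_mul, Finset.sum_add_distrib]

lemma dot_smul_left (c : ZMod 2) (x z : V g) : dot (c • x) z = c * dot x z := by
  simp [dot, Finset.mul_sum, mul_assoc]

lemma dot_add_right (x y z : V g) : dot x (y + z) = dot x y + dot x z := by
  rw [dot_comm, dot_add_left, dot_comm y x, dot_comm z x]

lemma dot_smul_right (c : ZMod 2) (x z : V g) : dot x (c • z) = c * dot x z := by
  rw [dot_comm, dot_smul_left, dot_comm]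

lemma dot_self (x : V g) : dot x x = ∑ i, x i := by
  simp [dot, (by decide : ∀ a : ZMod 2, a * a = a)]

lemma dot_single (x : V g) (j : Fin (g+1)) : dot x (Pi.single j 1) = x j := by
  simp [dot, Pi.single_apply]

def Orth (S : V g ≃ₗ[ZMod 2] V g) : Prop := ∀ x y, dot (S x) (S y) = dot x y

def R (v w : V g) : Prop := ∃ S : V g ≃ₗ[ZMod 2] V g, Orth S ∧ S v = w

lemma R.refl (v : V g) : R v v := ⟨LinearEquiv.refl _ _, fun _ _ => rfl, rfl⟩

lemma Orth.symm {S : V g ≃ₗ[ZMod 2] V g} (h : Orth S) : Orth S.symm := by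
  intro x y
  have := h (S.symm x) (S.symm y)
  simpa using this.symm

lemma R.symm {v w : V g} (h : R v w) : R w v := by
  obtain ⟨S, hS, hv⟩ := h
  exact ⟨S.symm, hS.symm, by rw [← hv]; simp⟩

lemma R.trans {u v w : V g} (h1 : R u v) (h2 : R v w) : R u w := by
  obtain ⟨S, hS, hv⟩ := h1
  obtain ⟨S', hS', hv'⟩ := h2
  exact ⟨S.trans S', fun x y => by rw [LinearEquiv.trans_apply, LinearEquiv.trans_apply, hS', hS], by
    simp [LinearEquiv.trans_apply, hv, hv']⟩

/-- permutation as orthogonal map -/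
def permE (σ : Equiv.Perm (Fin (g+1))) : V g ≃ₗ[ZMod 2] V g :=
  LinearEquiv.funCongrLeft (ZMod 2) (ZMod 2) σ

lemma permE_apply (σ : Equiv.Perm (Fin (g+1))) (x : V g) (i : Fin (g+1)) :
    permE σ x i = x (σ i) := rfl

lemma permE_orth (σ : Equiv.Perm (Fin (g+1))) : Orth (permE σ) := by
  intro x y
  simpa [dot, permE_apply] using Equiv.sum_comp σ (fun i => x i * y i)

/-- transvection -/
def tvL (u : V g) : V g →ₗ[ZMod 2] V g where
  toFun x := x + dot x u • u
  map_add' x y := by rw [dot_add_left, add_smul]; abel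
  map_smul' c x := by simp only [RingHom.id_apply]; rw [dot_smul_left, mul_smul, smul_add]

lemma tvL_invol (u : V g) (hu : dot u u = 0) : Function.Involutive (tvL u) := by
  intro x
  show (x + dot x u • u) + dot (x + dot x u • u) u • u = x
  rw [dot_add_left, dot_smul_left, hu, mul_zero, add_zero, add_assoc, ← add_smul,
    (by decide : ∀ a : ZMod 2, a + a = 0) (dot x u), zero_smul, add_zero]

def tv (u : V g) (hu : dot u u = 0) : V g ≃ₗ[ZMod 2] V g :=
  { tvL u with
    invFun := tvL u
    left_inv := tvL_invol u hu
    right_inv := tvL_invol u hu }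

lemma tv_apply (u : V g) (hu : dot u u = 0) (x : V g) : tv u hu x = x + dot x u • u := rfl

lemma tv_orth (u : V g) (hu : dot u u = 0) : Orth (tv u hu) := by
  intro x y
  rw [tv_apply, tv_apply, dot_add_left, dot_add_right, dot_add_right, dot_smul_left,
    dot_smul_left, dot_smul_right, dot_smul_right, hu, dot_comm u y, mul_zero, mul_zero,
    add_zero, mul_comm]
  rw [add_assoc, (by decide : ∀ a : ZMod 2, a + a = 0), add_zero]


def ind (s : Finset (Fin (g+1))) : V g := fun i => if i ∈ s then 1 else 0

lemma sum_ind (s : Finset (Fin (g+1))) : ∑ i, ind s i = (s.card : ZMod 2) := by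
  simp [ind, Finset.sum_ite_mem]

lemma ind_add_ind (s t : Finset (Fin (g+1))) : ind s + ind t = ind (symmDiff s t) := by
  funext i
  by_cases hs : i ∈ s <;> by_cases ht : i ∈ t <;>
    simp [ind, Finset.mem_symmDiff, hs, ht] <;> decide

lemma dot_ind_ind (s t : Finset (Fin (g+1))) :
    dot (ind s) (ind t) = (((s ∩ t).card : ℕ) : ZMod 2) := by
  rw [← sum_ind]
  refine Finset.sum_congr rfl fun i _ => ?_
  by_cases hs : i ∈ s <;> by_cases ht : i ∈ t <;> simp [ind, hs, ht]

lemma zero_ne_one_fin (hg : 2 ≤ g) : (0 : Fin (g+1)) ≠ 1 := by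
  intro h
  have := congrArg Fin.val h
  simp [Fin.val_one'] at this
  omega

lemma swap_eq_iff {α : Type*} [DecidableEq α] (a b x y : α) :
    Equiv.swap a b x = y ↔ x = Equiv.swap a b y := by
  constructor
  · intro h; rw [← h, Equiv.swap_apply_self]
  · intro h; rw [h, Equiv.swap_apply_self]

lemma R_singleton (j : Fin (g+1)) : R (ind {j}) (ind {(0 : Fin (g+1))}) := by
  refine ⟨permE (Equiv.swap 0 j), permE_orth _, ?_⟩
  funext i
  show ind {j} (Equiv.swap 0 j i) = ind {(0 : Fin (g+1))} i
  have : Equiv.swap (0 : Fin (g+1)) j i = j ↔ i = 0 := by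
    rw [swap_eq_iff, Equiv.swap_apply_right]
  simp [ind, this]

lemma R_pair (j k : Fin (g+1)) (hjk : j ≠ k) (hg : 2 ≤ g) :
    R (ind {j, k}) (ind {(0 : Fin (g+1)), 1}) := by
  set m := Equiv.swap (0 : Fin (g+1)) j k with hm
  set σ : Equiv.Perm (Fin (g+1)) := (Equiv.swap (1 : Fin (g+1)) m).trans (Equiv.swap 0 j) with hσ
  have hm0 : m ≠ 0 := by
    intro h
    rw [hm, swap_eq_iff, Equiv.swap_apply_left] at h
    exact hjk h.symm
  have h0 : σ 0 = j := by
    rw [hσ]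
    simp only [Equiv.trans_apply]
    rw [Equiv.swap_apply_of_ne_of_ne (zero_ne_one_fin hg) (Ne.symm hm0),
      Equiv.swap_apply_left]
  have h1 : σ 1 = k := by
    rw [hσ]
    simp only [Equiv.trans_apply]
    rw [Equiv.swap_apply_left, hm, Equiv.swap_apply_self]
  refine ⟨permE σ, permE_orth _, ?_⟩
  funext i
  show ind {j, k} (σ i) = ind {(0 : Fin (g+1)), 1} i
  simp only [ind, Finset.mem_insert, Finset.mem_singleton, ← h0, ← h1,
    EmbeddingLike.apply_eq_iff_eq]

lemma R_step (s : Finset (Fin (g+1))) {a b c d : Fin (g+1)}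
    (ha : a ∈ s) (hb : b ∈ s) (hc : c ∈ s) (hd : d ∉ s)
    (hab : a ≠ b) (hac : a ≠ c) (hbc : b ≠ c) :
    R (ind s) (ind (symmDiff s {a, b, c, d})) := by
  have had : a ≠ d := fun h => hd (h ▸ ha)
  have hbd : b ≠ d := fun h => hd (h ▸ hb)
  have hcd : c ≠ d := fun h => hd (h ▸ hc)
  have hcard4 : ({a, b, c, d} : Finset (Fin (g+1))).card = 4 := by
    rw [Finset.card_insert_of_notMem (by simp [hab, hac, had]),
      Finset.card_insert_of_notMem (by simp [hbc, hbd]),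
      Finset.card_insert_of_notMem (by simp [hcd]), Finset.card_singleton]
  have hu : dot (ind ({a, b, c, d} : Finset (Fin (g+1)))) (ind {a, b, c, d}) = 0 := by
    rw [dot_ind_ind, Finset.inter_self, hcard4]; decide
  have hinter : s ∩ ({a, b, c, d} : Finset (Fin (g+1))) = {a, b, c} := by
    ext x
    simp only [Finset.mem_inter, Finset.mem_insert, Finset.mem_singleton]
    constructor
    · rintro ⟨hx, h | h | h | h⟩ <;> subst h
      · exact Or.inl rfl
      · exact Or.inr (Or.inl rfl)
      · exact Or.inr (Or.inr rfl)
      · exact absurd hx hd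
    · rintro (h | h | h) <;> subst h <;> simp_all
  have hdots : dot (ind s) (ind ({a, b, c, d} : Finset (Fin (g+1)))) = 1 := by
    rw [dot_ind_ind, hinter,
      Finset.card_insert_of_notMem (by simp [hab, hac]),
      Finset.card_insert_of_notMem (by simp [hbc]), Finset.card_singleton]
    decide
  refine ⟨tv (ind {a, b, c, d}) hu, tv_orth _ _, ?_⟩
  rw [tv_apply, hdots, one_smul, ind_add_ind]


lemma symmDiff_eq_insert (s : Finset (Fin (g+1))) {a b c d : Fin (g+1)}
    (ha : a ∈ s) (hb : b ∈ s) (hc : c ∈ s) (hd : d ∉ s) :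
    symmDiff s {a, b, c, d} = insert d (s \ {a, b, c}) := by
  ext x
  simp only [Finset.mem_symmDiff, Finset.mem_insert, Finset.mem_singleton, Finset.mem_sdiff]
  by_cases hxa : x = a <;> by_cases hxb : x = b <;> by_cases hxc : x = c <;>
    by_cases hxd : x = d <;> subst_vars <;> simp_all

def tgt (g : ℕ) (p : ZMod 2) : V g := ind (if p = 1 then {0} else {(0 : Fin (g+1)), 1})

lemma reduce (hg : 2 ≤ g) : ∀ (k : ℕ) (s : Finset (Fin (g+1))), s.card = k →
    s.Nonempty → s ≠ Finset.univ → R (ind s) (tgt g ((s.card : ℕ) : ZMod 2)) := by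
  intro k
  induction k using Nat.strong_induction_on with
  | _ k ih =>
    intro s hk hne hnu
    match k, hk with
    | 0, hk => exact absurd (Finset.card_eq_zero.mp hk) (Finset.nonempty_iff_ne_empty.mp hne)
    | 1, hk =>
      obtain ⟨j, rfl⟩ := Finset.card_eq_one.mp hk
      rw [hk, tgt, if_pos (by decide)]
      exact R_singleton j
    | 2, hk =>
      obtain ⟨x, y, hxy, rfl⟩ := Finset.card_eq_two.mp hk
      rw [hk, tgt, if_neg (by decide)]
      exact R_pair x y hxy hg
    | (k+3), hk =>
      obtain ⟨a, ha⟩ := hne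
      have hea : (s.erase a).card = k + 2 := by rw [Finset.card_erase_of_mem ha, hk]; omega
      obtain ⟨b, hb⟩ := Finset.card_pos.mp (by omega : 0 < (s.erase a).card)
      have heb : ((s.erase a).erase b).card = k + 1 := by
        rw [Finset.card_erase_of_mem hb, hea]; omega
      obtain ⟨c, hc⟩ := Finset.card_pos.mp (by omega : 0 < ((s.erase a).erase b).card)
      obtain ⟨hcb, hcs'⟩ := Finset.mem_erase.mp hc
      obtain ⟨hca, hcs⟩ := Finset.mem_erase.mp hcs'
      obtain ⟨hba, hbs⟩ := Finset.mem_erase.mp hb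
      obtain ⟨d, hd⟩ : ∃ d, d ∉ s := by
        by_contra h
        push_neg at h
        exact hnu (Finset.eq_univ_iff_forall.mpr h)
      have hsub : ({a, b, c} : Finset (Fin (g+1))) ⊆ s := by
        intro x hx
        simp only [Finset.mem_insert, Finset.mem_singleton] at hx
        rcases hx with rfl | rfl | rfl <;> assumption
      have hc3 : ({a, b, c} : Finset (Fin (g+1))).card = 3 := by
        rw [Finset.card_insert_of_notMem (by simp [Ne.symm hba, Ne.symm hca]),
          Finset.card_insert_of_notMem (by simp [Ne.symm hcb]), Finset.card_singleton]
      set s' : Finset (Fin (g+1)) := insert d (s \ {a, b, c}) with hs'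
      have hdns : d ∉ s \ ({a, b, c} : Finset (Fin (g+1))) := fun h =>
        hd (Finset.mem_sdiff.mp h).1
      have hcard' : s'.card = k + 1 := by
        rw [hs', Finset.card_insert_of_notMem hdns, Finset.card_sdiff_of_subset hsub, hc3, hk]
        omega
      have hne' : s'.Nonempty := ⟨d, Finset.mem_insert_self _ _⟩
      have hnu' : s' ≠ Finset.univ := by
        intro h
        have h2 := congrArg Finset.card h
        rw [hcard', Finset.card_univ, Fintype.card_fin] at h2
        have h3 : s.card ≤ g + 1 := by simpa using Finset.card_le_univ s
        omega
      have step := R_step s ha hbs hcs hd (Ne.symm hba) (Ne.symm hca) (Ne.symm hcb)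
      rw [symmDiff_eq_insert s ha hbs hcs hd, ← hs'] at step
      have hrec := ih (k+1) (by omega) s' hcard' hne' hnu'
      have hcast : ((s'.card : ℕ) : ZMod 2) = ((s.card : ℕ) : ZMod 2) := by
        have h4 : ((k + 3 : ℕ) : ZMod 2) = ((k + 1 : ℕ) : ZMod 2) + 2 := by push_cast; ring
        rw [hcard', hk, h4, (by decide : (2 : ZMod 2) = 0), add_zero]
      rw [hcast] at hrec
      exact step.trans hrec


def vecOf (θ : (Fin (g+1) → ZMod 2) →ₗ[ZMod 2] ZMod 2) : V g := fun i => θ (Pi.single i 1)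

lemma single_eq (i : Fin (g+1)) :
    (Pi.single i (1 : ZMod 2)) = fun j => if i = j then (1 : ZMod 2) else 0 := by
  funext j
  simp [Pi.single_apply, eq_comm]

lemma apply_eq_dot (θ : (Fin (g+1) → ZMod 2) →ₗ[ZMod 2] ZMod 2) (x : V g) :
    θ x = dot (vecOf θ) x := by
  conv_lhs => rw [LinearMap.pi_apply_eq_sum_univ θ x]
  refine Finset.sum_congr rfl fun i _ => ?_
  rw [vecOf, single_eq, smul_eq_mul, mul_comm]

def supp (θ : (Fin (g+1) → ZMod 2) →ₗ[ZMod 2] ZMod 2) : Finset (Fin (g+1)) :=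
  Finset.univ.filter fun i => vecOf θ i = 1

lemma vecOf_eq_ind (θ : (Fin (g+1) → ZMod 2) →ₗ[ZMod 2] ZMod 2) :
    vecOf θ = ind (supp θ) := by
  funext i
  rcases (by decide : ∀ a : ZMod 2, a = 0 ∨ a = 1) (vecOf θ i) with h | h <;>
    simp [ind, supp, h]

lemma supp_nonempty {θ : (Fin (g+1) → ZMod 2) →ₗ[ZMod 2] ZMod 2} (h0 : θ ≠ 0) :
    (supp θ).Nonempty := by
  rw [Finset.nonempty_iff_ne_empty]
  intro h
  apply h0
  refine LinearMap.ext fun x => ?_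
  rw [apply_eq_dot, vecOf_eq_ind, h]
  simp [dot, ind]

lemma supp_ne_univ {θ : (Fin (g+1) → ZMod 2) →ₗ[ZMod 2] ZMod 2}
    (h1 : ⇑θ ≠ fun x : Fin (g+1) → ZMod 2 => ∑ i, x i) : supp θ ≠ Finset.univ := by
  intro h
  apply h1
  funext x
  rw [apply_eq_dot, vecOf_eq_ind, h]
  simp [dot, ind]

lemma sum_basis_eq (θ : (Fin (g+1) → ZMod 2) →ₗ[ZMod 2] ZMod 2) :
    ∑ i, θ (Pi.single i 1) = (((supp θ).card : ℕ) : ZMod 2) := by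
  rw [← sum_ind, ← vecOf_eq_ind]
  rfl

lemma sum_T {T : V g ≃ₗ[ZMod 2] V g} (hT : Orth T) (x : V g) :
    ∑ i, T x i = ∑ i, x i := by
  have := hT x x
  rwa [dot_self, dot_self] at this

lemma sum_single : (∑ i, Pi.single i (1 : ZMod 2)) = fun _ : Fin (g+1) => (1 : ZMod 2) := by
  funext j
  rw [Finset.sum_apply]
  simp [Pi.single_apply]

lemma T_ones {T : V g ≃ₗ[ZMod 2] V g} (hT : Orth T) :
    T (fun _ => (1 : ZMod 2)) = fun _ => (1 : ZMod 2) := by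
  funext j
  have h1 : T (fun _ => (1:ZMod 2)) j = dot (T fun _ => 1) (Pi.single j 1) :=
    (dot_single _ j).symm
  rw [h1, ← T.apply_symm_apply (Pi.single j 1), hT]
  have h2 : dot (fun _ => (1:ZMod 2)) (T.symm (Pi.single j 1))
      = ∑ i, T.symm (Pi.single j 1) i := by simp [dot]
  rw [h2, sum_T hT.symm]
  simp [Pi.single_apply]

end OrbitAux

open OrbitAux

/-- For `g ≥ 2`, two linear forms on `Fin (g+1) → ZMod 2`, each distinct from the zero
form `θ₀` and from `θ₁ : x ↦ ∑ i, x i`, are in the same orbit under right composition by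
the orthogonal group if and only if they have the same sum of values on the standard
basis vectors. -/
theorem orbit_iff_sum_on_basis (g : ℕ) (hg : 2 ≤ g)
    (θ θ' : (Fin (g + 1) → ZMod 2) →ₗ[ZMod 2] ZMod 2)
    (hθ0 : θ ≠ 0)
    (hθ1 : ⇑θ ≠ fun x : Fin (g + 1) → ZMod 2 => ∑ i, x i)
    (hθ'0 : θ' ≠ 0)
    (hθ'1 : ⇑θ' ≠ fun x : Fin (g + 1) → ZMod 2 => ∑ i, x i) :
    (∃ T : (Fin (g + 1) → ZMod 2) ≃ₗ[ZMod 2] (Fin (g + 1) → ZMod 2),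
        (∀ x y : Fin (g + 1) → ZMod 2, ∑ i, T x i * T y i = ∑ i, x i * y i) ∧
        ∀ x : Fin (g + 1) → ZMod 2, θ' x = θ (T x)) ↔
      ∑ i, θ (Pi.single i (1 : ZMod 2)) = ∑ i, θ' (Pi.single i (1 : ZMod 2)) := by
  constructor
  · rintro ⟨T, hTo, hθT⟩
    have hT : Orth T := fun x y => hTo x y
    have e1 : ∑ i, θ' (Pi.single i (1 : ZMod 2)) = θ (T fun _ => 1) := by
      rw [Finset.sum_congr rfl fun i _ => hθT (Pi.single i 1), ← map_sum, ← map_sum, sum_single]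
    have e2 : ∑ i, θ (Pi.single i (1 : ZMod 2)) = θ (fun _ => 1) := by
      rw [← map_sum, sum_single]
    rw [e1, T_ones hT, e2]
  · intro hsum
    have hs := sum_basis_eq θ
    have hs' := sum_basis_eq θ'
    rw [hs, hs'] at hsum
    have r1 := reduce hg (supp θ).card (supp θ) rfl (supp_nonempty hθ0) (supp_ne_univ hθ1)
    have r2 := reduce hg (supp θ').card (supp θ') rfl (supp_nonempty hθ'0) (supp_ne_univ hθ'1)
    rw [hsum] at r1
    have hR : R (ind (supp θ)) (ind (supp θ')) := r1.trans r2.symm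
    rw [← vecOf_eq_ind, ← vecOf_eq_ind] at hR
    obtain ⟨S, hS, hSv⟩ := hR
    refine ⟨S.symm, fun x y => hS.symm x y, fun x => ?_⟩
    rw [apply_eq_dot θ', apply_eq_dot θ, ← hSv, ← hS (vecOf θ) (S.symm x),
      S.apply_symm_apply]
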